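/- In the setting of the previous decomposition: if C_{r+1} = 0 then the restriction of g to ker b is nondegenerate (its kernel is zero); if C_{r+1} ≠ 0 and θ = g(p,·) for a g-isotropic vector p ∈ Eᵣ (g(p,p) = 0, p ≠ 0), then the kernel of g restricted to ker b × ker b equals ℝ·p. -/
import Mathlib


open scoped BigOperators

private lemma func_aux {E : Type*} [AddCommGroup E] [Module ℝ E] (φ K : E →ₗ[ℝ] ℝ)
    (h : ∀ x, φ x = 0 → K x = 0) : ∃ t : ℝ, ∀ x, K x = t * φ x := by
  have h2 : ⨅ _ : Unit, LinearMap.ker ((fun _ : Unit => φ) ()) ≤ LinearMap.ker K := by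
    intro x hx
    exact LinearMap.mem_ker.2 (h x (LinearMap.mem_ker.1 (Submodule.mem_iInf _ |>.1 hx ())))
  have h3 := mem_span_of_iInf_ker_le_ker (ι := Unit) (L := fun _ => φ) (K := K) h2
  rw [Submodule.mem_span_range_iff_exists_fun] at h3
  obtain ⟨cc, hcc⟩ := h3
  refine ⟨cc (), fun x => ?_⟩
  rw [← hcc]
  simp

/-- In the setting of the previous decomposition (blocks `W i`, `i : Fin (r+1)`,
with `g i` positive definite for `i ≠ last` and `g last` a nondegenerate Lorentzian-type form;
`p` a nonzero isotropic vector of the last block; `θ = g last p`; coefficients `C` with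
`C last = 0` and `c`; `b = Σ C i · g i + c·θ⊗θ`; `G = Σ g i` the total form):
if `c = 0` then the restriction of `G` to `ker b` is nondegenerate; if `c ≠ 0` then the
kernel of `G` restricted to `ker b × ker b` equals `ℝ·p`. -/
theorem stmt3 {r : ℕ} (W : Fin (r + 1) → Type*)
    [∀ i, AddCommGroup (W i)] [∀ i, Module ℝ (W i)]
    [FiniteDimensional ℝ (W (Fin.last r))]
    (g : ∀ i, W i →ₗ[ℝ] W i →ₗ[ℝ] ℝ)
    (hg_symm : ∀ i, ∀ x y : W i, g i x y = g i y x)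
    (hg_nondeg : ∀ i, ∀ x : W i, (∀ y : W i, g i x y = 0) → x = 0)
    (hg_pos : ∀ i, i ≠ Fin.last r → ∀ x : W i, x ≠ 0 → 0 < g i x x)
    (p : W (Fin.last r)) (hp : p ≠ 0) (hp0 : g (Fin.last r) p p = 0)
    (θ : W (Fin.last r) →ₗ[ℝ] ℝ) (hθ : θ = g (Fin.last r) p)
    (C : Fin (r + 1) → ℝ) (hC : C (Fin.last r) = 0) (c : ℝ)
    (b G : (∀ i, W i) → (∀ i, W i) → ℝ)
    (hb : ∀ x y, b x y =
      (∑ i, C i * g i (x i) (y i)) + c * θ (x (Fin.last r)) * θ (y (Fin.last r)))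
    (hG : ∀ x y, G x y = ∑ i, g i (x i) (y i)) :
    (c = 0 → ∀ x : ∀ i, W i, (∀ y, b x y = 0) →
      (∀ y, (∀ z, b y z = 0) → G x y = 0) → x = 0) ∧
    (c ≠ 0 → ∀ x : ∀ i, W i,
      ((∀ y, b x y = 0) ∧ (∀ y, (∀ z, b y z = 0) → G x y = 0)) ↔
        ∃ t : ℝ, x = t • Pi.single (Fin.last r) p) := by
  -- θ p = 0 and θ ≠ 0
  have hθp : θ p = 0 := by rw [hθ]; exact hp0
  have hθne : ∃ w : W (Fin.last r), θ w ≠ 0 := by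
    by_contra h
    push_neg at h
    exact hp (hg_nondeg _ p (by simpa [hθ] using h))
  -- evaluation of b and G against single vectors (second argument)
  have keyb : ∀ (x : ∀ i, W i) (j : Fin (r + 1)) (v : W j),
      b x (Pi.single j v) = C j * g j (x j) v
        + c * θ (x (Fin.last r)) * θ (Pi.single j v (Fin.last r)) := by
    intro x j v
    rw [hb]
    congr 1
    rw [Fintype.sum_eq_single j (fun i hi => by
      rw [Pi.single_eq_of_ne hi, map_zero, mul_zero])]
    rw [Pi.single_eq_same]
  have keyG : ∀ (x : ∀ i, W i) (j : Fin (r + 1)) (v : W j),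
      G x (Pi.single j v) = g j (x j) v := by
    intro x j v
    rw [hG]
    rw [Fintype.sum_eq_single j (fun i hi => by
      rw [Pi.single_eq_of_ne hi, map_zero])]
    rw [Pi.single_eq_same]
  -- symmetry of b and G
  have bsymm : ∀ x y, b x y = b y x := by
    intro x y
    rw [hb, hb]
    have : ∀ i ∈ Finset.univ, C i * g i (x i) (y i) = C i * g i (y i) (x i) :=
      fun i _ => by rw [hg_symm]
    rw [Finset.sum_congr rfl this]
    ring
  have Gsymm : ∀ x y, G x y = G y x := by
    intro x y
    rw [hG, hG]
    exact Finset.sum_congr rfl fun i _ => by rw [hg_symm]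
  -- single vectors of the last block with θ w = 0 are in ker b
  have single_last_mem : ∀ w : W (Fin.last r), θ w = 0 →
      ∀ z, b (Pi.single (Fin.last r) w) z = 0 := by
    intro w hw z
    rw [bsymm, keyb, hC, Pi.single_eq_same, hw]
    ring
  constructor
  · -- case c = 0
    intro hc x hx hxG
    -- last component vanishes
    have hlast : x (Fin.last r) = 0 := by
      apply hg_nondeg
      intro w
      have hmem : ∀ z, b (Pi.single (Fin.last r) w) z = 0 := by
        intro z
        rw [bsymm, keyb, hC, hc]
        ring
      have := hxG _ hmem
      rwa [keyG] at this
    -- G x x = 0 with nonneg terms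
    have hxx : G x x = 0 := hxG x hx
    rw [hG] at hxx
    have hterm : ∀ i ∈ Finset.univ, (0:ℝ) ≤ g i (x i) (x i) := by
      intro i _
      by_cases hi : i = Fin.last r
      · subst hi; rw [hlast]; simp
      · by_cases hxi : x i = 0
        · rw [hxi]; simp
        · exact le_of_lt (hg_pos i hi (x i) hxi)
    have hall := (Finset.sum_eq_zero_iff_of_nonneg hterm).1 hxx
    funext i
    by_cases hi : i = Fin.last r
    · subst hi; exact hlast
    · by_contra hxi
      exact absurd (hall i (Finset.mem_univ i)) (ne_of_gt (hg_pos i hi (x i) hxi))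
  · -- case c ≠ 0
    intro hc x
    constructor
    · rintro ⟨hx, hxG⟩
      -- components i ≠ last vanish
      have hcomp : ∀ i, i ≠ Fin.last r → x i = 0 := by
        intro i hi
        by_cases hCi : C i = 0
        · -- single i v is in ker b, use hxG
          apply hg_nondeg
          intro v
          have hmem : ∀ z, b (Pi.single i v) z = 0 := by
            intro z
            rw [bsymm, keyb, hCi, Pi.single_eq_of_ne (Ne.symm hi), map_zero]
            ring
          have := hxG _ hmem
          rwa [keyG] at this
        · -- use hx
          apply hg_nondeg
          intro v
          have := hx (Pi.single i v)
          rw [keyb, Pi.single_eq_of_ne (Ne.symm hi), map_zero] at this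
          have h2 : C i * ((g i) (x i)) v = 0 := by linarith [this]
          exact (mul_eq_zero.1 h2).resolve_left hCi
      -- last component: g last (x last) vanishes on ker θ
      have hker : ∀ w : W (Fin.last r), θ w = 0 → g (Fin.last r) (x (Fin.last r)) w = 0 := by
        intro w hw
        have := hxG _ (single_last_mem w hw)
        rwa [keyG] at this
      obtain ⟨t, ht⟩ := func_aux θ (g (Fin.last r) (x (Fin.last r))) hker
      refine ⟨t, ?_⟩
      have hlast : x (Fin.last r) = t • p := by
        have hsub : x (Fin.last r) - t • p = 0 := by
          apply hg_nondeg
          intro y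
          rw [map_sub, map_smul, LinearMap.sub_apply, LinearMap.smul_apply, ht y, hθ]
          simp [smul_eq_mul]
        exact sub_eq_zero.1 hsub
      funext i
      by_cases hi : i = Fin.last r
      · subst hi
        rw [hlast, Pi.smul_apply, Pi.single_eq_same]
      · rw [hcomp i hi, Pi.smul_apply, Pi.single_eq_of_ne hi, smul_zero]
    · rintro ⟨t, rfl⟩
      have hsingle : (t • Pi.single (Fin.last r) p : ∀ i, W i)
          = Pi.single (Fin.last r) (t • p) := by
        funext i
        by_cases hi : i = Fin.last r
        · subst hi; rw [Pi.smul_apply, Pi.single_eq_same, Pi.single_eq_same]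
        · rw [Pi.smul_apply, Pi.single_eq_of_ne hi, Pi.single_eq_of_ne hi, smul_zero]
      have hθtp : θ (t • p) = 0 := by rw [map_smul, hθp, smul_zero]
      constructor
      · intro y
        rw [hsingle]
        exact single_last_mem (t • p) hθtp y
      · intro y hy
        -- first: θ (y last) = 0
        obtain ⟨w0, hw0⟩ := hθne
        have := hy (Pi.single (Fin.last r) w0)
        rw [keyb, hC, Pi.single_eq_same] at this
        have hθy : θ (y (Fin.last r)) = 0 := by
          have h2 : c * θ (y (Fin.last r)) * θ w0 = 0 := by linarith [this]
          rcases mul_eq_zero.1 h2 with h3 | h3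
          · exact (mul_eq_zero.1 h3).resolve_left hc
          · exact absurd h3 hw0
        have hval : g (Fin.last r) (t • p) (y (Fin.last r)) = 0 := by
          rw [map_smul, LinearMap.smul_apply, ← hθ, hθy, smul_zero]
        rw [hsingle, Gsymm, keyG, hg_symm]
        exact hval
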